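/- If U is a bipartite graph, then the edge-graph S(Ū) of the complement of U is bipartite. -/

import Mathlib

/-- The edge-graph `S(U)` of a graph `U`: its vertices are the edges of `U`,
    two edges `u = {x,y}` and `v = {x,z}` (with `x, y, z` distinct) being
    adjacent iff `{y,z}` is not an edge of `U`. -/
def edgeGraph {V : Type*} (U : SimpleGraph V) : SimpleGraph U.edgeSet :=
  SimpleGraph.fromRel (fun u v => ∃ x y z : V, x ≠ y ∧ x ≠ z ∧ y ≠ z ∧
    (u : Sym2 V) = s(x, y) ∧ (v : Sym2 V) = s(x, z) ∧ ¬ U.Adj y z)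

open SimpleGraph

/-- If `U` is bipartite, then the edge-graph `S(Uᶜ)` of its complement is
    bipartite. -/
theorem edgeGraph_compl_bipartite {V : Type*} [Fintype V] (U : SimpleGraph V)
    (h : U.Colorable 2) : (edgeGraph Uᶜ).Colorable 2 := by
  obtain ⟨c⟩ := h
  refine ⟨Coloring.mk
    (fun e => Sym2.lift ⟨fun a b => c a + c b, fun a b => by exact add_comm _ _⟩ (e : Sym2 V)) ?_⟩
  rintro u v ⟨hne, hrel | hrel⟩ <;>
  · obtain ⟨x, y, z, hxy, hxz, hyz, hu, hv, hadj⟩ := hrel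
    have hUadj : U.Adj y z := by
      by_contra hc
      exact hadj ((compl_adj U y z).mpr ⟨hyz, hc⟩)
    have hcyz : c y ≠ c z := c.valid hUadj
    simp only [hu, hv, Sym2.lift_mk]
    first
      | exact fun hh => hcyz (add_left_cancel hh)
      | exact fun hh => hcyz (add_left_cancel hh.symm)
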